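/- Let Y ⊆ ℝ² be a discrete set with lim_{r→∞} r/G_Y(r) = 0, let v ∈ ℝ² be a nonzero vector and ε > 0. Then for almost every z ∈ Y (in density), there exist w ∈ Y \ {z} and an integer k ≥ 0 such that ‖(z − w) − kv‖ < ε. -/

import Mathlib

open Metric Set MeasureTheory Filter Real

noncomputable def setDist {E : Type*} [PseudoMetricSpace E] (A B : Set E) : ℝ :=
  sInf (Set.image2 dist A B)

def ray {E : Type*} [NormedAddCommGroup E] [NormedSpace ℝ E] (x v : E) : Set E :=
  {p : E | ∃ t : ℝ, 0 ≤ t ∧ p = x + t • v}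

lemma aux_norm_sq (x : EuclideanSpace ℝ (Fin 2)) : ‖x‖^2 = x 0^2 + x 1^2 := by
  rw [EuclideanSpace.norm_eq, Real.sq_sqrt (by positivity)]
  simp [Fin.sum_univ_two, sq_abs]

lemma aux_inner (x y : EuclideanSpace ℝ (Fin 2)) :
    (inner ℝ x y : ℝ) = x 0 * y 0 + x 1 * y 1 := by
  simp [PiLp.inner_apply, Fin.sum_univ_two, RCLike.inner_apply, conj_trivial]; ring

lemma aux_key (v x : EuclideanSpace ℝ (Fin 2)) (c : ℝ) :
    ‖v‖^2 * ‖x - c • v‖^2 =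
      ((inner ℝ x v : ℝ) - c * ‖v‖^2)^2 + (x 1 * v 0 - x 0 * v 1)^2 := by
  have h3 := aux_norm_sq (x - c • v)
  have h4 : ∀ i, (x - c • v) i = x i - c * v i := by
    intro i; simp [PiLp.sub_apply, PiLp.smul_apply]
  rw [aux_inner, h3, h4 0, h4 1, aux_norm_sq v]
  ring

lemma aux_floor (a b : ℝ) (h : ⌊a⌋ = ⌊b⌋) : |a - b| < 1 := by
  have ha1 := Int.fract_nonneg a
  have ha2 := Int.fract_lt_one a
  have hb1 := Int.fract_nonneg b
  have hb2 := Int.fract_lt_one b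
  have e1 : Int.fract a = a - ⌊a⌋ := rfl
  have e2 : Int.fract b = b - ⌊b⌋ := rfl
  have hc : ((⌊a⌋ : ℤ) : ℝ) = ((⌊b⌋ : ℤ) : ℝ) := by exact_mod_cast h
  rw [abs_lt]
  constructor <;> nlinarith

set_option maxHeartbeats 1000000 in
lemma count_lemma (v : EuclideanSpace ℝ (Fin 2)) (hv : v ≠ 0) (ε : ℝ) (hε : 0 < ε)
    (E : Set (EuclideanSpace ℝ (Fin 2)))
    (hsep : ∀ z ∈ E, ∀ z' ∈ E, z ≠ z' → ∀ k : ℤ, ε ≤ ‖(z - z') - (k : ℝ) • v‖) :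
    ∃ C : ℝ, 0 < C ∧ ∀ r : ℝ, 1 ≤ r →
      ((E ∩ Metric.ball 0 r).ncard : ℝ) ≤ C * r := by
  have hu : 0 < ‖v‖ := norm_pos_iff.mpr hv
  obtain ⟨M, hM_def⟩ : ∃ M : ℕ, M = ⌈2 * ‖v‖ / ε⌉₊ + 1 := ⟨_, rfl⟩
  have hM1 : (1:ℝ) ≤ (M:ℝ) := by exact_mod_cast Nat.one_le_iff_ne_zero.mpr (by omega)
  have hMpos : (0:ℝ) < (M:ℝ) := lt_of_lt_of_le one_pos hM1
  have hM : 2 * ‖v‖ / ε ≤ (M:ℝ) := by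
    refine le_trans (Nat.le_ceil _) ?_
    rw [hM_def]; push_cast; linarith
  have hMc : ‖v‖ * ε / 2 * M ≥ ‖v‖^2 := by
    have h5 : (‖v‖*ε/2) * (2*‖v‖/ε) = ‖v‖^2 := by field_simp
    nlinarith [mul_le_mul_of_nonneg_left hM (show (0:ℝ) ≤ ‖v‖*ε/2 by positivity)]
  refine ⟨(4/ε + 3) * ((M:ℝ) + 1), by positivity, ?_⟩
  intro r hr
  have hrpos : (0:ℝ) < r := lt_of_lt_of_le one_pos hr
  have hc2pos : 0 < ‖v‖ * ε / 2 := by positivity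
  obtain ⟨f, hf⟩ : ∃ f : EuclideanSpace ℝ (Fin 2) → ℤ × ℤ,
      f = fun z => (⌊(z 1 * v 0 - z 0 * v 1) / (‖v‖ * ε / 2)⌋,
        ⌊Int.fract ((inner ℝ z v : ℝ) / ‖v‖^2) * M⌋) := ⟨_, rfl⟩
  obtain ⟨K, hK⟩ : ∃ K : ℤ, K = ⌈2 * r / ε⌉ := ⟨_, rfl⟩
  have hK1 : 1 ≤ K := hK ▸ Int.ceil_pos.mpr (by positivity)
  have hKr : (K : ℝ) ≤ 2 * r / ε + 1 := hK ▸ le_of_lt (Int.ceil_lt_add_one _)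
  have hK2 : 2 * r / ε ≤ (K : ℝ) := hK ▸ Int.le_ceil _
  have hmaps : ∀ z ∈ E ∩ Metric.ball 0 r,
      f z ∈ (↑(Finset.Icc (-K) K ×ˢ Finset.Icc (0:ℤ) (M:ℤ)) : Set (ℤ × ℤ)) := by
    intro z hz
    have hzb : ‖z‖ < r := by
      have := hz.2; rwa [Metric.mem_ball, dist_zero_right] at this
    have hL := aux_key v z 0
    simp only [zero_smul, sub_zero, zero_mul] at hL
    have hTz : |z 1 * v 0 - z 0 * v 1| < ‖v‖ * r := by
      have h2 : |z 1 * v 0 - z 0 * v 1| ≤ ‖v‖ * ‖z‖ := by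
        by_contra h
        push_neg at h
        nlinarith [sq_abs (z 1 * v 0 - z 0 * v 1), abs_nonneg (z 1 * v 0 - z 0 * v 1),
          norm_nonneg z, mul_nonneg (norm_nonneg v) (norm_nonneg z),
          sq_nonneg ((inner ℝ z v : ℝ))]
      nlinarith [mul_lt_mul_of_pos_left hzb hu]
    have hTb : |(z 1 * v 0 - z 0 * v 1) / (‖v‖ * ε / 2)| < 2 * r / ε := by
      rw [abs_div, abs_of_pos hc2pos, div_lt_iff₀ hc2pos]
      have h6 : 2 * r / ε * (‖v‖ * ε / 2) = ‖v‖ * r := by field_simp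
      rw [h6]; exact hTz
    have habs := abs_lt.mp hTb
    rw [hf]
    simp only [Finset.coe_product, Set.mem_prod, Finset.mem_coe, Finset.mem_Icc]
    refine ⟨⟨?_, ?_⟩, ?_, ?_⟩
    · rw [Int.le_floor]
      push_cast
      linarith [habs.1]
    · calc ⌊(z 1 * v 0 - z 0 * v 1) / (‖v‖ * ε / 2)⌋ ≤ ⌊(K:ℝ)⌋ :=
            Int.floor_le_floor (by linarith [habs.2])
        _ = K := Int.floor_intCast K
    · exact Int.floor_nonneg.mpr (mul_nonneg (Int.fract_nonneg _) (Nat.cast_nonneg _))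
    · have hfr1 : Int.fract ((inner ℝ z v : ℝ) / ‖v‖^2) * M < M := by
        nlinarith [Int.fract_lt_one ((inner ℝ z v : ℝ) / ‖v‖^2),
          Int.fract_nonneg ((inner ℝ z v : ℝ) / ‖v‖^2)]
      exact le_of_lt (Int.floor_lt.mpr (by exact_mod_cast hfr1))
  have hinj : Set.InjOn f (E ∩ Metric.ball 0 r) := by
    intro z hz z' hz' heq
    by_contra hne
    rw [hf] at heq
    have h1 : ⌊(z 1 * v 0 - z 0 * v 1) / (‖v‖ * ε / 2)⌋
        = ⌊(z' 1 * v 0 - z' 0 * v 1) / (‖v‖ * ε / 2)⌋ := congrArg Prod.fst heq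
    have h2 : ⌊Int.fract ((inner ℝ z v : ℝ) / ‖v‖^2) * M⌋
        = ⌊Int.fract ((inner ℝ z' v : ℝ) / ‖v‖^2) * M⌋ := congrArg Prod.snd heq
    have hT1 := aux_floor _ _ h1
    have hTd : |(z 1 * v 0 - z 0 * v 1) - (z' 1 * v 0 - z' 0 * v 1)| < ‖v‖ * ε / 2 := by
      rw [div_sub_div_same, abs_div, abs_of_pos hc2pos, div_lt_one hc2pos] at hT1
      exact hT1
    have hS1 := aux_floor _ _ h2
    have hS2 : |Int.fract ((inner ℝ z v : ℝ) / ‖v‖^2) - Int.fract ((inner ℝ z' v : ℝ) / ‖v‖^2)|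
        < 1 / M := by
      rw [← sub_mul, abs_mul, abs_of_pos hMpos] at hS1
      rw [lt_div_iff₀ hMpos]
      exact hS1
    obtain ⟨m, hm⟩ : ∃ m : ℤ,
        m = ⌊(inner ℝ z v : ℝ) / ‖v‖^2⌋ - ⌊(inner ℝ z' v : ℝ) / ‖v‖^2⌋ := ⟨_, rfl⟩
    have hfr : Int.fract ((inner ℝ z v : ℝ) / ‖v‖^2) - Int.fract ((inner ℝ z' v : ℝ) / ‖v‖^2)
        = (inner ℝ z v : ℝ) / ‖v‖^2 - (inner ℝ z' v : ℝ) / ‖v‖^2 - m := by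
      simp only [Int.fract, hm]; push_cast; ring
    have hup : (0:ℝ) < ‖v‖^2 := by positivity
    have hSd : |(inner ℝ z v : ℝ) - (inner ℝ z' v : ℝ) - m * ‖v‖^2| < ‖v‖ * ε / 2 := by
      rw [hfr] at hS2
      have h3 : |(inner ℝ z v : ℝ) - (inner ℝ z' v : ℝ) - m * ‖v‖^2|
          = |(inner ℝ z v : ℝ) / ‖v‖^2 - (inner ℝ z' v : ℝ) / ‖v‖^2 - m| * ‖v‖^2 := by
        rw [← abs_of_pos hup, ← abs_mul]
        congr 1; field_simp; rw [abs_of_pos hup]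
      rw [h3]
      calc |(inner ℝ z v : ℝ) / ‖v‖^2 - (inner ℝ z' v : ℝ) / ‖v‖^2 - (m:ℝ)| * ‖v‖^2
          < (1/M) * ‖v‖^2 := mul_lt_mul_of_pos_right hS2 hup
        _ ≤ ‖v‖ * ε / 2 := by
            rw [div_mul_eq_mul_div, one_mul, div_le_iff₀ hMpos]
            linarith [hMc]
    have hid := aux_key v (z - z') (m : ℝ)
    have hTlin : (z - z') 1 * v 0 - (z - z') 0 * v 1
        = (z 1 * v 0 - z 0 * v 1) - (z' 1 * v 0 - z' 0 * v 1) := by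
      simp only [PiLp.sub_apply]; ring
    have hSlin : (inner ℝ (z - z') v : ℝ) = (inner ℝ z v : ℝ) - (inner ℝ z' v : ℝ) :=
      inner_sub_left z z' v
    rw [hTlin, hSlin] at hid
    have hs := hsep z hz.1 z' hz'.1 hne m
    have hna := abs_lt.mp hTd
    have hnb := abs_lt.mp hSd
    have hA2 := sq_lt_sq' hnb.1 hnb.2
    have hB2 := sq_lt_sq' hna.1 hna.2
    have hsq : ε^2 ≤ ‖(z - z') - (m:ℝ) • v‖^2 := pow_le_pow_left₀ hε.le hs 2
    have h8 := mul_le_mul_of_nonneg_left hsq (le_of_lt hup)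
    rw [hid] at h8
    have h9 : (‖v‖*ε/2)^2 = ‖v‖^2*ε^2/4 := by ring
    linarith [hA2, hB2, h8, h9, mul_pos hup (pow_pos hε 2)]
  have hcount := Set.ncard_le_ncard_of_injOn f hmaps hinj (Finset.finite_toSet _)
  rw [Set.ncard_coe_finset, Finset.card_product, Int.card_Icc, Int.card_Icc] at hcount
  have e1 : (K + 1 - -K).toNat = 2*K.toNat + 1 := by omega
  have e2 : ((M:ℤ) + 1 - 0).toNat = M + 1 := by omega
  rw [e1, e2] at hcount
  have e3 : ((K.toNat : ℕ) : ℝ) = (K:ℝ) := by exact_mod_cast Int.toNat_of_nonneg (by omega)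
  have hcr : ((E ∩ Metric.ball 0 r).ncard : ℝ) ≤ (2*(K:ℝ)+1) * ((M:ℝ)+1) := by
    calc ((E ∩ Metric.ball 0 r).ncard : ℝ)
        ≤ (((2*K.toNat+1) * (M+1) : ℕ) : ℝ) := by exact_mod_cast hcount
      _ = (2*(K:ℝ)+1) * ((M:ℝ)+1) := by push_cast [e3]; ring
  calc ((E ∩ Metric.ball 0 r).ncard : ℝ) ≤ (2*(K:ℝ)+1) * ((M:ℝ)+1) := hcr
    _ ≤ ((4/ε + 3) * r) * ((M:ℝ)+1) := by
        have h10 : 2*(K:ℝ)+1 ≤ (4/ε + 3) * r := by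
          have h7 : 4 / ε * r = 2 * (2 * r / ε) := by ring
          nlinarith [hKr, hε, hrpos]
        nlinarith [hM1]
    _ = (4/ε + 3) * ((M:ℝ) + 1) * r := by ring

theorem stmt12 (Y : Set (EuclideanSpace ℝ (Fin 2)))
    (hdisc : ∀ (x : EuclideanSpace ℝ (Fin 2)) (r : ℝ), (Y ∩ Metric.ball x r).Finite)
    (hgrow : Tendsto (fun r : ℝ =>
        r / ((Y ∩ Metric.ball (0 : EuclideanSpace ℝ (Fin 2)) r).ncard : ℝ)) atTop (nhds 0))
    (v : EuclideanSpace ℝ (Fin 2)) (hv : v ≠ 0) (ε : ℝ) (hε : 0 < ε) :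
    Tendsto (fun r : ℝ =>
        (({z ∈ Y | ¬ ∃ w ∈ Y \ {z}, ∃ k : ℕ, ‖(z - w) - (k : ℝ) • v‖ < ε} ∩
            Metric.ball (0 : EuclideanSpace ℝ (Fin 2)) r).ncard : ℝ) /
          ((Y ∩ Metric.ball (0 : EuclideanSpace ℝ (Fin 2)) r).ncard : ℝ))
      atTop (nhds 0) := by
  set E : Set (EuclideanSpace ℝ (Fin 2)) :=
    {z ∈ Y | ¬ ∃ w ∈ Y \ {z}, ∃ k : ℕ, ‖(z - w) - (k : ℝ) • v‖ < ε} with hE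
  have hsep : ∀ z ∈ E, ∀ z' ∈ E, z ≠ z' → ∀ k : ℤ, ε ≤ ‖(z - z') - (k : ℝ) • v‖ := by
    intro z hz z' hz' hne k
    obtain ⟨hzY, hzP⟩ := hz
    obtain ⟨hz'Y, hz'P⟩ := hz'
    push_neg at hzP hz'P
    rcases le_or_gt 0 k with hk | hk
    · have h := hzP z' ⟨hz'Y, fun h => hne (Set.mem_singleton_iff.mp h).symm⟩ k.toNat
      have hc : ((k.toNat : ℕ) : ℝ) = (k : ℝ) := by
        exact_mod_cast congrArg (Int.cast : ℤ → ℝ) (Int.toNat_of_nonneg hk)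
      rwa [hc] at h
    · have h := hz'P z ⟨hzY, fun h => hne (Set.mem_singleton_iff.mp h)⟩ (-k).toNat
      have hc : (((-k).toNat : ℕ) : ℝ) = -(k : ℝ) := by
        have := Int.toNat_of_nonneg (by omega : (0:ℤ) ≤ -k)
        exact_mod_cast congrArg (Int.cast : ℤ → ℝ) this
      rw [hc] at h
      have heq : ‖(z' - z) - (-(k:ℝ)) • v‖ = ‖(z - z') - (k:ℝ) • v‖ := by
        rw [← norm_neg]
        congr 1
        module
      rwa [heq] at h
  obtain ⟨C, hC, hbound⟩ := count_lemma v hv ε hε E hsep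
  have h0 : ∀ᶠ r in atTop, 0 ≤ ((E ∩ Metric.ball (0:EuclideanSpace ℝ (Fin 2)) r).ncard : ℝ) /
      ((Y ∩ Metric.ball (0:EuclideanSpace ℝ (Fin 2)) r).ncard : ℝ) := by
    filter_upwards with r
    positivity
  have hle : ∀ᶠ r in atTop, ((E ∩ Metric.ball (0:EuclideanSpace ℝ (Fin 2)) r).ncard : ℝ) /
      ((Y ∩ Metric.ball (0:EuclideanSpace ℝ (Fin 2)) r).ncard : ℝ)
      ≤ C * (r / ((Y ∩ Metric.ball (0:EuclideanSpace ℝ (Fin 2)) r).ncard : ℝ)) := by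
    rw [eventually_atTop]
    refine ⟨1, fun r hr => ?_⟩
    rcases eq_or_lt_of_le (Nat.cast_nonneg (Y ∩ Metric.ball (0:EuclideanSpace ℝ (Fin 2)) r).ncard :
        (0:ℝ) ≤ _) with hG | hG
    · rw [← hG, div_zero, div_zero, mul_zero]
    · rw [mul_div_assoc']
      rw [div_le_div_iff_of_pos_right hG]
      exact hbound r hr
  have hlim : Tendsto (fun r : ℝ => C * (r /
      ((Y ∩ Metric.ball (0:EuclideanSpace ℝ (Fin 2)) r).ncard : ℝ))) atTop (nhds 0) := by
    have := hgrow.const_mul C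
    rwa [mul_zero] at this
  exact squeeze_zero' h0 hle hlim
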